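/- Let n ≥ 4 and let G = ([n], w) be a multigraph in which every 4-element vertex set spans total multiplicity at most 9 and every edge multiplicity is at most 2 and at least 0. Suppose additionally every 3-element vertex set spans total multiplicity at most 5, and all edge multiplicities are at least 1. Let E be the set of pairs with multiplicity 2. Then the graph ([n], E) contains no C₃ and no C₄, and consequently the product of all edge multiplicities of G equals 2^|E| ≤ 2^(ex(n,{C₃,C₄})). -/

import Mathlib

open Finset

def pairs (n : ℕ) (X : Finset (Fin n)) : Finset (Fin n × Fin n) :=
  (X ×ˢ X).filter (fun p => p.1 < p.2)

def mgS (n : ℕ) (w : Fin n → Fin n → ℕ) (X : Finset (Fin n)) : ℕ :=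
  ∑ p ∈ pairs n X, w p.1 p.2

def mgP (n : ℕ) (w : Fin n → Fin n → ℕ) (X : Finset (Fin n)) : ℕ :=
  ∏ p ∈ pairs n X, w p.1 p.2

def IsNSQ (n s q : ℕ) (w : Fin n → Fin n → ℕ) : Prop :=
  ∀ X : Finset (Fin n), X.card = s → mgS n w X ≤ q

def C3C4Free {n : ℕ} (G : SimpleGraph (Fin n)) : Prop :=
  (∀ x y z : Fin n, G.Adj x y → G.Adj y z → G.Adj x z → False) ∧
  (∀ a b c d : Fin n, a ≠ c → b ≠ d →
    G.Adj a b → G.Adj b c → G.Adj c d → G.Adj d a → False)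

noncomputable def exC34 (n : ℕ) : ℕ :=
  sSup {m | ∃ G : SimpleGraph (Fin n), C3C4Free G ∧ m = Nat.card G.edgeSet}

lemma two_mgS (n : ℕ) (w : Fin n → Fin n → ℕ) (hsym : ∀ i j, w i j = w j i)
    (X : Finset (Fin n)) :
    2 * mgS n w X = ∑ i ∈ X, ∑ j ∈ X, if i = j then 0 else w i j := by
  have hswap : ∑ p ∈ (X ×ˢ X).filter (fun p => p.2 < p.1), w p.1 p.2
      = ∑ p ∈ (X ×ˢ X).filter (fun p => p.1 < p.2), w p.1 p.2 := by
    apply Finset.sum_nbij' (i := Prod.swap) (j := Prod.swap)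
    · intro a ha; simp only [mem_filter, mem_product] at *; exact ⟨⟨ha.1.2, ha.1.1⟩, ha.2⟩
    · intro a ha; simp only [mem_filter, mem_product] at *; exact ⟨⟨ha.1.2, ha.1.1⟩, ha.2⟩
    · intro a _; simp
    · intro a _; simp
    · intro a _; exact (hsym a.2 a.1).symm
  rw [← Finset.sum_product']
  have : ∑ p ∈ X ×ˢ X, (if p.1 = p.2 then 0 else w p.1 p.2)
      = ∑ p ∈ X ×ˢ X, ((if p.1 < p.2 then w p.1 p.2 else 0) + (if p.2 < p.1 then w p.1 p.2 else 0)) := by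
    apply Finset.sum_congr rfl
    intro p _
    rcases lt_trichotomy p.1 p.2 with h | h | h
    · simp [h, h.ne, not_lt_of_gt h]
    · simp [h, lt_irrefl]
    · simp [h, h.ne', not_lt_of_gt h]
  rw [this, Finset.sum_add_distrib, ← Finset.sum_filter, ← Finset.sum_filter, hswap]
  show 2 * mgS n w X = mgS n w X + mgS n w X
  ring

lemma mgS3 (n : ℕ) (w : Fin n → Fin n → ℕ) (hsym : ∀ i j, w i j = w j i)
    (x y z : Fin n) (hxy : x ≠ y) (hxz : x ≠ z) (hyz : y ≠ z) :
    mgS n w {x, y, z} = w x y + w x z + w y z := by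
  have h := two_mgS n w hsym {x, y, z}
  simp [Finset.sum_insert, hxy, hxz, hyz, hxy.symm, hxz.symm, hyz.symm, Finset.mem_insert] at h
  rw [hsym y x, hsym z x, hsym z y] at h
  omega

lemma mgS4 (n : ℕ) (w : Fin n → Fin n → ℕ) (hsym : ∀ i j, w i j = w j i)
    (a b c d : Fin n) (hab : a ≠ b) (hac : a ≠ c) (had : a ≠ d)
    (hbc : b ≠ c) (hbd : b ≠ d) (hcd : c ≠ d) :
    mgS n w {a, b, c, d} = w a b + w a c + w a d + w b c + w b d + w c d := by
  have h := two_mgS n w hsym {a, b, c, d}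
  simp [Finset.sum_insert, hab, hac, had, hbc, hbd, hcd, hab.symm, hac.symm, had.symm,
    hbc.symm, hbd.symm, hcd.symm, Finset.mem_insert] at h
  rw [hsym b a, hsym c a, hsym d a, hsym c b, hsym d b, hsym d c] at h
  omega

lemma prod_eq_pow (n : ℕ) (w : Fin n → Fin n → ℕ)
    (hmult : ∀ i j : Fin n, i ≠ j → 1 ≤ w i j ∧ w i j ≤ 2) :
    mgP n w Finset.univ
      = 2 ^ ((pairs n Finset.univ).filter (fun p => w p.1 p.2 = 2)).card := by
  rw [mgP, ← Finset.prod_filter_mul_prod_filter_not (pairs n Finset.univ)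
    (fun p => w p.1 p.2 = 2)]
  rw [Finset.prod_congr rfl (fun p hp => (Finset.mem_filter.mp hp).2),
    Finset.prod_const]
  have h1 : ∏ p ∈ (pairs n Finset.univ).filter (fun p => ¬ w p.1 p.2 = 2), w p.1 p.2 = 1 := by
    apply Finset.prod_eq_one
    intro p hp
    simp only [Finset.mem_filter, pairs, Finset.mem_product] at hp
    have := hmult p.1 p.2 (ne_of_lt hp.1.2)
    omega
  rw [h1, mul_one]

lemma card_eq_edge (n : ℕ) (w : Fin n → Fin n → ℕ) (hsym : ∀ i j, w i j = w j i) :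
    ((pairs n Finset.univ).filter (fun p => w p.1 p.2 = 2)).card
      = Nat.card (SimpleGraph.fromRel (fun i j : Fin n => w i j = 2)).edgeSet := by
  classical
  set G := SimpleGraph.fromRel (fun i j : Fin n => w i j = 2) with hG
  rw [Nat.card_coe_set_eq, Set.ncard_eq_toFinset_card']
  apply Finset.card_bij (fun (p : Fin n × Fin n) _ => Sym2.mk p.1 p.2)
  · rintro ⟨a, b⟩ hp
    simp only [Finset.mem_filter, pairs, Finset.mem_product] at hp
    simp only [Set.mem_toFinset, SimpleGraph.mem_edgeSet, hG, SimpleGraph.fromRel_adj]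
    exact ⟨ne_of_lt hp.1.2, Or.inl hp.2⟩
  · rintro ⟨a1, a2⟩ ha ⟨b1, b2⟩ hb h
    simp only [Finset.mem_filter, pairs, Finset.mem_product] at ha hb
    rw [Sym2.mk_eq_mk_iff] at h
    rcases h with h | h
    · exact h
    · simp only [Prod.swap_prod_mk, Prod.mk.injEq] at h
      exfalso
      obtain ⟨h1, h2⟩ := h
      subst h1; subst h2
      exact lt_asymm ha.1.2 hb.1.2
  · intro e he
    simp only [Set.mem_toFinset] at he
    induction e with
    | _ u v =>
      rw [SimpleGraph.mem_edgeSet, SimpleGraph.fromRel_adj] at he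
      obtain ⟨huv, h2⟩ := he
      have hw : w u v = 2 := by rcases h2 with h | h; exact h; rw [hsym]; exact h
      rcases lt_or_gt_of_ne huv with h | h
      · exact ⟨(u, v), by simp [pairs, h, hw], rfl⟩
      · exact ⟨(v, u), by simp [pairs, h, hsym v u, hw], Sym2.eq_swap⟩

theorem mult2_pairs_C3C4Free (n : ℕ) (hn : 4 ≤ n) (w : Fin n → Fin n → ℕ)
    (hsym : ∀ i j, w i j = w j i)
    (h49 : IsNSQ n 4 9 w)
    (h35 : IsNSQ n 3 5 w)
    (hmult : ∀ i j : Fin n, i ≠ j → 1 ≤ w i j ∧ w i j ≤ 2) :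
    C3C4Free (SimpleGraph.fromRel (fun i j : Fin n => w i j = 2)) ∧
    mgP n w Finset.univ =
      2 ^ Nat.card (SimpleGraph.fromRel (fun i j : Fin n => w i j = 2)).edgeSet ∧
    Nat.card (SimpleGraph.fromRel (fun i j : Fin n => w i j = 2)).edgeSet ≤ exC34 n := by
  set G := SimpleGraph.fromRel (fun i j : Fin n => w i j = 2) with hG
  have hadj : ∀ i j, G.Adj i j → i ≠ j ∧ w i j = 2 := by
    intro i j hij
    rw [hG, SimpleGraph.fromRel_adj] at hij
    refine ⟨hij.1, ?_⟩
    rcases hij.2 with h | h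
    · exact h
    · rw [hsym]; exact h
  have hfree : C3C4Free G := by
    constructor
    · intro x y z hxy hyz hxz
      obtain ⟨nxy, wxy⟩ := hadj x y hxy
      obtain ⟨nyz, wyz⟩ := hadj y z hyz
      obtain ⟨nxz, wxz⟩ := hadj x z hxz
      have hcard : ({x, y, z} : Finset (Fin n)).card = 3 :=
        Finset.card_eq_three.mpr ⟨x, y, z, nxy, nxz, nyz, rfl⟩
      have := h35 {x, y, z} hcard
      rw [mgS3 n w hsym x y z nxy nxz nyz] at this
      omega
    · intro a b c d hac hbd h1 h2 h3 h4
      obtain ⟨nab, wab⟩ := hadj a b h1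
      obtain ⟨nbc, wbc⟩ := hadj b c h2
      obtain ⟨ncd, wcd⟩ := hadj c d h3
      obtain ⟨nda, wda⟩ := hadj d a h4
      have nad : a ≠ d := nda.symm
      have wad : w a d = 2 := by rw [hsym]; exact wda
      have hwac := hmult a c hac
      have hwbd := hmult b d hbd
      have hcard : ({a, b, c, d} : Finset (Fin n)).card = 4 := by
        rw [Finset.card_insert_of_notMem (by simp [nab, hac, nad]),
          Finset.card_insert_of_notMem (by simp [nbc, hbd]),
          Finset.card_insert_of_notMem (by simp [ncd]), Finset.card_singleton]
      have := h49 {a, b, c, d} hcard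
      rw [mgS4 n w hsym a b c d nab hac nad nbc hbd ncd] at this
      omega
  refine ⟨hfree, ?_, ?_⟩
  · rw [prod_eq_pow n w hmult, card_eq_edge n w hsym]
  · have hbdd : BddAbove {m | ∃ H : SimpleGraph (Fin n), C3C4Free H ∧ m = Nat.card H.edgeSet} := by
      refine ⟨Nat.card (Sym2 (Fin n)), ?_⟩
      rintro m ⟨H, _, rfl⟩
      exact Nat.card_le_card_of_injective (Subtype.val : H.edgeSet → Sym2 (Fin n))
        Subtype.val_injective
    exact le_csSup hbdd ⟨G, hfree, rfl⟩
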